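/- For an even symbol f on the unit circle (f_j = f_{−j}) and any n ≥ 1, the product of the two Toeplitz+Hankel determinants det(f_{j−k} + f_{j+k+1})_{j,k=0}^{n−1} · det(f_{j−k} − f_{j+k+1})_{j,k=0}^{n−1} equals (2^{2n²−2n}/π^{2n}) · D_n^H(f √((1+x)/(1−x))) · D_n^H(f √((1−x)/(1+x))), where both Hankel determinants use the substitution x = cos θ on [−1,1]. -/

import Mathlib

open MeasureTheory Polynomial Polynomial.Chebyshev Matrix

open scoped Real

/-- Degree bound and leading coefficient of Chebyshev `U`. -/
lemma U_deg_coeff : ∀ j : ℕ, (U ℝ (j:ℤ)).natDegree ≤ j ∧ (U ℝ (j:ℤ)).coeff j = 2^j := by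
  intro j
  induction j using Nat.strong_induction_on with
  | _ j ih =>
    match j with
    | 0 => simp
    | 1 =>
      constructor
      · simpa using (Polynomial.natDegree_mul_le (p := (2:ℝ[X])) (q := X)).trans (by simp)
      · simp [Polynomial.coeff_ofNat_mul]
    | (j+2) =>
      have h1 := ih (j+1) (by omega)
      have h0 := ih j (by omega)
      have hU : U ℝ ((j:ℤ)+2) = 2 * X * U ℝ ((j:ℤ)+1) - U ℝ (j:ℤ) := U_add_two ℝ j
      have hcast : ((j+2 : ℕ) : ℤ) = (j:ℤ)+2 := by push_cast; ring
      have hcast1 : ((j+1 : ℕ) : ℤ) = (j:ℤ)+1 := by push_cast; ring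
      rw [hcast, hU]
      rw [← hcast1] at hU ⊢
      constructor
      · refine (Polynomial.natDegree_sub_le _ _).trans (max_le ?_ (h0.1.trans (by omega)))
        refine (Polynomial.natDegree_mul_le).trans ?_
        have h2X : (2 * X : ℝ[X]).natDegree ≤ 1 := (Polynomial.natDegree_mul_le).trans (by simp)
        omega
      · have hz : (U ℝ ((j:ℕ)+1 : ℕ)).coeff (j+2) = 0 :=
          Polynomial.coeff_eq_zero_of_natDegree_lt (by omega)
        have hz0 : (U ℝ (j:ℤ)).coeff (j+2) = 0 :=
          Polynomial.coeff_eq_zero_of_natDegree_lt (by omega)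
        rw [Polynomial.coeff_sub, hz0, mul_assoc, Polynomial.coeff_ofNat_mul,
          Polynomial.coeff_X_mul, h1.2]
        ring

/-- Chebyshev-like polynomials of the third and fourth kind. -/
noncomputable def Vq (j : ℕ) : ℝ[X] := U ℝ (j:ℤ) - U ℝ ((j:ℤ) - 1)
noncomputable def Wq (j : ℕ) : ℝ[X] := U ℝ (j:ℤ) + U ℝ ((j:ℤ) - 1)

lemma U_pred_deg (j : ℕ) : (U ℝ ((j:ℤ) - 1)).natDegree ≤ j ∧ (U ℝ ((j:ℤ)-1)).coeff j = 0 := by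
  cases j with
  | zero => simp
  | succ j =>
    have h := U_deg_coeff j
    have : ((j+1:ℕ):ℤ) - 1 = (j:ℤ) := by push_cast; ring
    rw [this]
    exact ⟨h.1.trans (by omega), Polynomial.coeff_eq_zero_of_natDegree_lt (by omega)⟩

lemma Vq_deg (j : ℕ) : (Vq j).natDegree ≤ j :=
  (Polynomial.natDegree_sub_le _ _).trans (max_le (U_deg_coeff j).1 (U_pred_deg j).1)

lemma Wq_deg (j : ℕ) : (Wq j).natDegree ≤ j :=
  (Polynomial.natDegree_add_le _ _).trans (max_le (U_deg_coeff j).1 (U_pred_deg j).1)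

lemma Vq_lead (j : ℕ) : (Vq j).coeff j = 2^j := by
  rw [Vq, Polynomial.coeff_sub, (U_deg_coeff j).2, (U_pred_deg j).2, sub_zero]

lemma Wq_lead (j : ℕ) : (Wq j).coeff j = 2^j := by
  rw [Wq, Polynomial.coeff_add, (U_deg_coeff j).2, (U_pred_deg j).2, add_zero]

lemma Vq_coeff_eq_zero {j a : ℕ} (h : j < a) : (Vq j).coeff a = 0 :=
  Polynomial.coeff_eq_zero_of_natDegree_lt (lt_of_le_of_lt (Vq_deg j) h)

lemma Wq_coeff_eq_zero {j a : ℕ} (h : j < a) : (Wq j).coeff a = 0 :=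
  Polynomial.coeff_eq_zero_of_natDegree_lt (lt_of_le_of_lt (Wq_deg j) h)

lemma Vq_eval {θ : ℝ} (hθ : θ ∈ Set.Ioo 0 π) (j : ℕ) :
    (Vq j).eval (Real.cos θ) * Real.cos (θ/2) = Real.cos ((2*j+1) * θ / 2) := by
  have hs : Real.sin (θ/2) ≠ 0 :=
    ne_of_gt (Real.sin_pos_of_pos_of_lt_pi (by linarith [hθ.1]) (by linarith [hθ.2, Real.pi_pos]))
  have h1 := Polynomial.Chebyshev.U_real_cos θ (j:ℤ)
  have h0 := Polynomial.Chebyshev.U_real_cos θ ((j:ℤ) - 1)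
  have hsin : Real.sin θ = 2 * Real.sin (θ/2) * Real.cos (θ/2) := by
    rw [← Real.sin_two_mul]; ring_nf
  have key : (Vq j).eval (Real.cos θ) * Real.sin θ
      = 2 * Real.sin (θ/2) * Real.cos ((2*j+1) * θ / 2) := by
    rw [Vq, Polynomial.eval_sub, sub_mul, h1, h0]
    push_cast
    rw [show ((j:ℝ)+1)*θ = ((j:ℝ)+1)*θ from rfl]
    rw [Real.sin_sub_sin]
    ring_nf
  apply mul_left_cancel₀ (mul_ne_zero two_ne_zero hs)
  calc 2 * Real.sin (θ/2) * ((Vq j).eval (Real.cos θ) * Real.cos (θ/2))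
      = (Vq j).eval (Real.cos θ) * Real.sin θ := by rw [hsin]; ring
    _ = 2 * Real.sin (θ/2) * Real.cos ((2*j+1) * θ / 2) := key

lemma Wq_eval {θ : ℝ} (hθ : θ ∈ Set.Ioo 0 π) (j : ℕ) :
    (Wq j).eval (Real.cos θ) * Real.sin (θ/2) = Real.sin ((2*j+1) * θ / 2) := by
  have hc : Real.cos (θ/2) ≠ 0 := by
    have : θ/2 ∈ Set.Ioo (-(π/2)) (π/2) := ⟨by linarith [hθ.1, Real.pi_pos], by linarith [hθ.2]⟩
    exact ne_of_gt (Real.cos_pos_of_mem_Ioo this)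
  have h1 := Polynomial.Chebyshev.U_real_cos θ (j:ℤ)
  have h0 := Polynomial.Chebyshev.U_real_cos θ ((j:ℤ) - 1)
  have hsin : Real.sin θ = 2 * Real.sin (θ/2) * Real.cos (θ/2) := by
    rw [← Real.sin_two_mul]; ring_nf
  have key : (Wq j).eval (Real.cos θ) * Real.sin θ
      = 2 * Real.cos (θ/2) * Real.sin ((2*j+1) * θ / 2) := by
    rw [Wq, Polynomial.eval_add, add_mul, h1, h0]
    push_cast
    have hadd : ∀ x y : ℝ, Real.sin x + Real.sin y
        = 2 * Real.sin ((x+y)/2) * Real.cos ((x-y)/2) := by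
      intro x y
      have := Real.sin_sub_sin x (-y)
      simpa [sub_neg_eq_add, Real.cos_neg, ← sub_eq_add_neg] using this
    rw [hadd]
    ring_nf
  apply mul_left_cancel₀ (mul_ne_zero two_ne_zero hc)
  calc 2 * Real.cos (θ/2) * ((Wq j).eval (Real.cos θ) * Real.sin (θ/2))
      = (Wq j).eval (Real.cos θ) * Real.sin θ := by rw [hsin]; ring
    _ = 2 * Real.cos (θ/2) * Real.sin ((2*j+1) * θ / 2) := key

lemma cos_image_Ioo : Real.cos '' Set.Ioo 0 π = Set.Ioo (-1 : ℝ) 1 := by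
  ext y
  constructor
  · rintro ⟨θ, hθ, rfl⟩
    have h1 : Real.cos θ < Real.cos 0 :=
      Real.strictAntiOn_cos ⟨le_rfl, Real.pi_pos.le⟩ ⟨hθ.1.le, hθ.2.le⟩ hθ.1
    have h2 : Real.cos π < Real.cos θ :=
      Real.strictAntiOn_cos ⟨hθ.1.le, hθ.2.le⟩ ⟨Real.pi_pos.le, le_rfl⟩ hθ.2
    rw [Real.cos_zero] at h1
    rw [Real.cos_pi] at h2
    exact ⟨h2, h1⟩
  · intro hy
    refine ⟨Real.arccos y, ⟨Real.arccos_pos.2 hy.2, ?_⟩, Real.cos_arccos hy.1.le hy.2.le⟩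
    have harc : Real.arccos y = π/2 - Real.arcsin y := rfl
    have := Real.neg_pi_div_two_lt_arcsin.2 hy.1
    rw [harc]; linarith

lemma subst_cos (φ : ℝ → ℂ) :
    ∫ x in Set.Ioo (-1 : ℝ) 1, φ x
      = ∫ θ in Set.Ioo 0 π, (Real.sin θ : ℂ) * φ (Real.cos θ) := by
  have hder : ∀ θ ∈ Set.Ioo 0 π,
      HasDerivWithinAt Real.cos (-Real.sin θ) (Set.Ioo 0 π) θ :=
    fun θ _ => (Real.hasDerivAt_cos θ).hasDerivWithinAt
  have hinj : Set.InjOn Real.cos (Set.Ioo 0 π) :=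
    Set.InjOn.mono Set.Ioo_subset_Icc_self Real.injOn_cos
  have h := MeasureTheory.integral_image_eq_integral_abs_deriv_smul
    measurableSet_Ioo hder hinj φ
  rw [cos_image_Ioo] at h
  rw [h]
  refine MeasureTheory.setIntegral_congr_fun measurableSet_Ioo (fun θ hθ => ?_)
  have : |(-Real.sin θ)| = Real.sin θ := by
    rw [abs_neg, abs_of_nonneg (Real.sin_pos_of_pos_of_lt_pi hθ.1 hθ.2).le]
  rw [this, Complex.real_smul]

lemma half_facts {θ : ℝ} (hθ : θ ∈ Set.Ioo 0 π) :
    0 < Real.sin (θ/2) ∧ 0 < Real.cos (θ/2)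
      ∧ 1 + Real.cos θ = 2 * Real.cos (θ/2)^2
      ∧ 1 - Real.cos θ = 2 * Real.sin (θ/2)^2 := by
  have hs : 0 < Real.sin (θ/2) :=
    Real.sin_pos_of_pos_of_lt_pi (by linarith [hθ.1]) (by linarith [hθ.2, Real.pi_pos])
  have hc : 0 < Real.cos (θ/2) :=
    Real.cos_pos_of_mem_Ioo ⟨by linarith [hθ.1, Real.pi_pos], by linarith [hθ.2]⟩
  have h1 := Real.cos_sq (θ/2)
  rw [show 2 * (θ/2) = θ by ring] at h1
  have h2 := Real.sin_sq_add_cos_sq (θ/2)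
  exact ⟨hs, hc, by linarith, by linarith⟩

lemma weightP {θ : ℝ} (hθ : θ ∈ Set.Ioo 0 π) :
    Real.sin θ * Real.sqrt ((1 + Real.cos θ)/(1 - Real.cos θ)) = 2 * Real.cos (θ/2)^2 := by
  obtain ⟨hs, hc, h1, h2⟩ := half_facts hθ
  have hrat : (1 + Real.cos θ)/(1 - Real.cos θ) = (Real.cos (θ/2) / Real.sin (θ/2))^2 := by
    rw [h1, h2, div_pow]; ring
  rw [hrat, Real.sqrt_sq (div_nonneg hc.le hs.le),
    show Real.sin θ = 2 * Real.sin (θ/2) * Real.cos (θ/2) by rw [← Real.sin_two_mul]; ring_nf]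
  field_simp

lemma weightM {θ : ℝ} (hθ : θ ∈ Set.Ioo 0 π) :
    Real.sin θ * Real.sqrt ((1 - Real.cos θ)/(1 + Real.cos θ)) = 2 * Real.sin (θ/2)^2 := by
  obtain ⟨hs, hc, h1, h2⟩ := half_facts hθ
  have hrat : (1 - Real.cos θ)/(1 + Real.cos θ) = (Real.sin (θ/2) / Real.cos (θ/2))^2 := by
    rw [h1, h2, div_pow]; ring
  rw [hrat, Real.sqrt_sq (div_nonneg hs.le hc.le),
    show Real.sin θ = 2 * Real.sin (θ/2) * Real.cos (θ/2) by rw [← Real.sin_two_mul]; ring_nf]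
  field_simp

lemma det_factor (n : ℕ) (G : ℝ → ℂ)
    (hG : ∀ r : ℝ → ℝ, Continuous r →
      IntegrableOn (fun θ => G θ * (r θ : ℂ)) (Set.Ioo 0 π) volume)
    (P : ℕ → ℝ[X]) (hvan : ∀ j a : ℕ, j < a → (P j).coeff a = 0)
    (hdeg : ∀ j, (P j).natDegree ≤ j) (hlead : ∀ j : ℕ, (P j).coeff j = 2^j)
    (q : ℝ → ℝ) (hq : Continuous q) :
    Matrix.det (Matrix.of fun j k : Fin n => (1/(π:ℂ)) *
        ∫ θ in Set.Ioo 0 π, G θ *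
          (((P (j:ℕ)).eval (Real.cos θ) * (P (k:ℕ)).eval (Real.cos θ) * q θ : ℝ) : ℂ))
      = (1/(π:ℂ))^n * ((2:ℂ)^(∑ i ∈ Finset.range n, i))^2 *
        Matrix.det (Matrix.of fun a b : Fin n =>
          ∫ θ in Set.Ioo 0 π, G θ * (((Real.cos θ)^((a:ℕ)+(b:ℕ)) * q θ : ℝ) : ℂ)) := by
  classical
  set Mf : ℕ → ℕ → ℂ := fun a b =>
    ∫ θ in Set.Ioo 0 π, G θ * (((Real.cos θ)^(a+b) * q θ : ℝ) : ℂ) with hMf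
  set L : Matrix (Fin n) (Fin n) ℂ :=
    Matrix.of (fun j k : Fin n => ((P (j:ℕ)).coeff (k:ℕ) : ℂ)) with hL
  set M : Matrix (Fin n) (Fin n) ℂ := Matrix.of (fun a b : Fin n => Mf (a:ℕ) (b:ℕ)) with hM
  have hintab : ∀ a b : ℕ, IntegrableOn
      (fun θ => G θ * (((Real.cos θ)^(a+b) * q θ : ℝ) : ℂ)) (Set.Ioo 0 π) volume := by
    intro a b
    exact hG _ (by continuity)
  have hEntry : ∀ j k : Fin n,
      (1/(π:ℂ)) * ∫ θ in Set.Ioo 0 π, G θ *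
          (((P (j:ℕ)).eval (Real.cos θ) * (P (k:ℕ)).eval (Real.cos θ) * q θ : ℝ) : ℂ)
        = ((1/(π:ℂ)) • (L * M * Lᵀ)) j k := by
    intro j k
    have hjn : (P (j:ℕ)).natDegree < n := lt_of_le_of_lt (hdeg _) j.isLt
    have hkn : (P (k:ℕ)).natDegree < n := lt_of_le_of_lt (hdeg _) k.isLt
    have point : ∀ θ : ℝ, G θ *
        (((P (j:ℕ)).eval (Real.cos θ) * (P (k:ℕ)).eval (Real.cos θ) * q θ : ℝ) : ℂ)
        = ∑ a ∈ Finset.range n, ∑ b ∈ Finset.range n,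
            ((P (j:ℕ)).coeff a : ℂ) * ((P (k:ℕ)).coeff b : ℂ) *
              (G θ * (((Real.cos θ)^(a+b) * q θ : ℝ) : ℂ)) := by
      intro θ
      rw [Polynomial.eval_eq_sum_range' hjn, Polynomial.eval_eq_sum_range' hkn]
      push_cast
      rw [Finset.sum_mul_sum]
      simp only [Finset.sum_mul, Finset.mul_sum]
      refine Finset.sum_congr rfl fun a _ => Finset.sum_congr rfl fun b _ => ?_
      rw [pow_add]
      ring
    simp only [point]
    rw [MeasureTheory.integral_finset_sum _ (fun a _ =>
      MeasureTheory.integrable_finset_sum _ (fun b _ => ((hintab a b).const_mul _)))]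
    have step : (∑ a ∈ Finset.range n, ∫ θ in Set.Ioo 0 π,
          ∑ b ∈ Finset.range n, ((P (j:ℕ)).coeff a : ℂ) * ((P (k:ℕ)).coeff b : ℂ) *
            (G θ * (((Real.cos θ)^(a+b) * q θ : ℝ) : ℂ)))
        = ∑ a ∈ Finset.range n, ∑ b ∈ Finset.range n,
            ((P (j:ℕ)).coeff a : ℂ) * ((P (k:ℕ)).coeff b : ℂ) * Mf a b := by
      refine Finset.sum_congr rfl fun a _ => ?_
      rw [MeasureTheory.integral_finset_sum _ (fun b _ => ((hintab a b).const_mul _))]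
      exact Finset.sum_congr rfl fun b _ => MeasureTheory.integral_const_mul _ _
    rw [step]
    have hrhs : ((1/(π:ℂ)) • (L * M * Lᵀ)) j k
        = (1/(π:ℂ)) * ∑ a : Fin n, ∑ b : Fin n,
            ((P (j:ℕ)).coeff (a:ℕ) : ℂ) * ((P (k:ℕ)).coeff (b:ℕ) : ℂ) * Mf (a:ℕ) (b:ℕ) := by
      rw [Matrix.smul_apply, Matrix.mul_apply]
      simp only [Matrix.mul_apply, Matrix.transpose_apply, Finset.sum_mul]
      rw [Finset.sum_comm]
      simp only [smul_eq_mul, hL, hM, Matrix.of_apply]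
      congr 1
      refine Finset.sum_congr rfl fun a _ => Finset.sum_congr rfl fun b _ => by ring
    rw [hrhs]
    congr 1
    rw [← Fin.sum_univ_eq_sum_range (fun a => ∑ b ∈ Finset.range n,
      ((P (j:ℕ)).coeff a : ℂ) * ((P (k:ℕ)).coeff b : ℂ) * Mf a b) n]
    exact Finset.sum_congr rfl fun a _ =>
      (Fin.sum_univ_eq_sum_range (fun b =>
        ((P (j:ℕ)).coeff (a:ℕ) : ℂ) * ((P (k:ℕ)).coeff b : ℂ) * Mf (a:ℕ) b) n).symm
  have hmat : (Matrix.of fun j k : Fin n => (1/(π:ℂ)) *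
      ∫ θ in Set.Ioo 0 π, G θ *
        (((P (j:ℕ)).eval (Real.cos θ) * (P (k:ℕ)).eval (Real.cos θ) * q θ : ℝ) : ℂ))
      = (1/(π:ℂ)) • (L * M * Lᵀ) := by
    ext j k
    exact hEntry j k
  rw [hmat]
  have hLtri : L.BlockTriangular OrderDual.toDual := by
    intro i j hij
    simp only [hL, Matrix.of_apply]
    exact_mod_cast congrArg (Complex.ofReal) (hvan (i:ℕ) (j:ℕ) hij)
  have hdetL : L.det = (2:ℂ)^(∑ i ∈ Finset.range n, i) := by
    rw [Matrix.det_of_lowerTriangular L hLtri]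
    have : ∀ j : Fin n, L j j = (2:ℂ)^(j:ℕ) := by
      intro j
      simp only [hL, Matrix.of_apply]
      exact_mod_cast congrArg Complex.ofReal (hlead (j:ℕ))
    rw [Finset.prod_congr rfl (fun j _ => this j), Finset.prod_pow_eq_pow_sum]
    congr 1
    exact Fin.sum_univ_eq_sum_range (fun i => i) n
  rw [Matrix.det_smul, Matrix.det_mul, Matrix.det_mul, Matrix.det_transpose, hdetL,
    Fintype.card_fin]
  ring

/-- Fourier coefficient of a symbol `g(θ)` (standing for `g(e^{iθ})`). -/
noncomputable def circleCoeff (g : ℝ → ℂ) (j : ℤ) : ℂ :=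
  (1 / (2 * (π : ℂ))) *
    ∫ θ in (0:ℝ)..(2 * π), g θ * Complex.exp (-(j * θ) * Complex.I)

lemma circleCoeff_eq (g : ℝ → ℂ)
    (hint : IntervalIntegrable g MeasureTheory.volume 0 (2 * π))
    (heven : ∀ θ, g (-θ) = g θ) (hper : Function.Periodic g (2 * π)) (m : ℤ) :
    circleCoeff g m = (1/(π:ℂ)) * ∫ θ in Set.Ioo 0 π, g θ * (Real.cos (m * θ) : ℂ) := by
  have hpi := Real.pi_pos
  have hsub1 : Set.uIcc (0:ℝ) π ⊆ Set.uIcc 0 (2*π) := by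
    rw [Set.uIcc_of_le hpi.le, Set.uIcc_of_le (by linarith)]
    exact Set.Icc_subset_Icc le_rfl (by linarith)
  have hsub2 : Set.uIcc π (2*π) ⊆ Set.uIcc 0 (2*π) := by
    rw [Set.uIcc_of_le (by linarith), Set.uIcc_of_le (by linarith)]
    exact Set.Icc_subset_Icc (by linarith) le_rfl
  have hcont : ∀ m' : ℤ, Continuous (fun θ : ℝ => Complex.exp (-(m' * θ) * Complex.I)) := by
    intro m'
    fun_prop
  set F : ℝ → ℂ := fun θ => g θ * Complex.exp (-(m * θ) * Complex.I) with hF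
  set G : ℝ → ℂ := fun θ => g θ * Complex.exp ((m * θ) * Complex.I) with hG
  have hFint1 : IntervalIntegrable F volume 0 π :=
    (hint.mono_set hsub1).mul_continuousOn (hcont m).continuousOn
  have hFint2 : IntervalIntegrable F volume π (2*π) :=
    (hint.mono_set hsub2).mul_continuousOn (hcont m).continuousOn
  have hGint1 : IntervalIntegrable G volume 0 π := by
    have h := (hint.mono_set hsub1).mul_continuousOn (hcont (-m)).continuousOn
    have heq : (fun x : ℝ => g x * Complex.exp (-((-m : ℤ) * x) * Complex.I)) = G := by
      funext θ
      simp only [hG]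
      congr 2
      push_cast
      ring
    rwa [heq] at h
  have hsplit : ∫ θ in (0:ℝ)..(2*π), F θ
      = (∫ θ in (0:ℝ)..π, F θ) + ∫ θ in π..(2*π), F θ :=
    (intervalIntegral.integral_add_adjacent_intervals hFint1 hFint2).symm
  have hrefl : ∫ θ in π..(2*π), F θ = ∫ θ in (0:ℝ)..π, G θ := by
    have h := intervalIntegral.integral_comp_sub_left F (2*π) (a := 0) (b := π)
    rw [show 2*π - π = π by ring, show 2*π - 0 = 2*π by ring] at h
    rw [← h]
    refine intervalIntegral.integral_congr (fun x _ => ?_)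
    have hgx : g (2*π - x) = g x := by
      have h1 : g (-x + 2*π) = g (-x) := hper (-x)
      rw [show 2*π - x = -x + 2*π by ring, h1, heven]
    have hex : Complex.exp (-((m:ℂ) * ((2*π - x : ℝ) : ℂ)) * Complex.I)
        = Complex.exp (((m:ℂ) * x) * Complex.I) := by
      rw [show (-((m:ℂ) * ((2*π - x : ℝ) : ℂ)) * Complex.I : ℂ)
          = ((m:ℂ) * x) * Complex.I + ((-m : ℤ) : ℂ) * (2 * π * Complex.I) by push_cast; ring,
        Complex.exp_add, Complex.exp_int_mul_two_pi_mul_I, mul_one]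
    simp only [hF, hG, hgx, hex]
  have hsum : (∫ θ in (0:ℝ)..π, F θ) + ∫ θ in (0:ℝ)..π, G θ
      = ∫ θ in (0:ℝ)..π, g θ * (2 * (Real.cos (m * θ) : ℂ)) := by
    rw [← intervalIntegral.integral_add hFint1 hGint1]
    refine intervalIntegral.integral_congr (fun θ _ => ?_)
    have h2c : (2 : ℂ) * Complex.cos (m * θ)
        = Complex.exp ((m*θ:ℂ) * Complex.I) + Complex.exp (-(m*θ:ℂ) * Complex.I) :=
      Complex.two_cos _
    have : ((Real.cos (m * θ) : ℝ) : ℂ) = Complex.cos ((m : ℂ) * θ) := by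
      rw [Complex.ofReal_cos]
      norm_cast
    simp only [hF, hG, this]
    rw [← mul_add, h2c]
    ring_nf
  rw [circleCoeff, hsplit, hrefl, hsum]
  rw [intervalIntegral.integral_of_le hpi.le, MeasureTheory.integral_Ioc_eq_integral_Ioo]
  rw [show (fun θ => g θ * (2 * (Real.cos (m * θ) : ℂ))) = fun θ => 2 * (g θ * (Real.cos (m * θ) : ℂ)) from funext fun θ => by ring]
  rw [MeasureTheory.integral_const_mul]
  have : ((π : ℝ) : ℂ) ≠ 0 := by
    simpa using Real.pi_ne_zero
  field_simp

/-- Hankel determinant of a weight `w` on `[-1,1]`. -/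
noncomputable def hankelDet (w : ℝ → ℂ) (n : ℕ) : ℂ :=
  Matrix.det (Matrix.of fun j k : Fin n =>
    ∫ x in (-1:ℝ)..1, (x : ℂ)^((j : ℕ) + (k : ℕ)) * w x)

/-- Product of the two Toeplitz+Hankel determinants
`det(f_{j-k} ± f_{j+k+1})` in terms of Hankel determinants with the
weights `f(e^{iθ(x)}) √((1±x)/(1∓x))` on `[-1,1]`. -/
theorem toeplitz_plus_hankel_product (g : ℝ → ℂ)
    (hint : IntervalIntegrable g MeasureTheory.volume 0 (2 * π))
    (heven : ∀ θ, g (-θ) = g θ) (hper : Function.Periodic g (2 * π))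
    (hmomP : ∀ m : ℕ, IntervalIntegrable
      (fun x : ℝ => (x : ℂ)^m * (g (Real.arccos x) * (Real.sqrt ((1 + x) / (1 - x)) : ℂ)))
      MeasureTheory.volume (-1) 1)
    (hmomM : ∀ m : ℕ, IntervalIntegrable
      (fun x : ℝ => (x : ℂ)^m * (g (Real.arccos x) * (Real.sqrt ((1 - x) / (1 + x)) : ℂ)))
      MeasureTheory.volume (-1) 1)
    (n : ℕ) (hn : 1 ≤ n) :
    Matrix.det (Matrix.of fun j k : Fin n =>
        circleCoeff g ((j : ℤ) - (k : ℤ)) + circleCoeff g ((j : ℤ) + (k : ℤ) + 1))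
      * Matrix.det (Matrix.of fun j k : Fin n =>
        circleCoeff g ((j : ℤ) - (k : ℤ)) - circleCoeff g ((j : ℤ) + (k : ℤ) + 1))
      = ((2 : ℂ)^(2 * (n : ℤ)^2 - 2 * (n : ℤ)) / (π : ℂ)^(2 * n)) *
          hankelDet (fun x => g (Real.arccos x) * (Real.sqrt ((1 + x) / (1 - x)) : ℂ)) n *
          hankelDet (fun x => g (Real.arccos x) * (Real.sqrt ((1 - x) / (1 + x)) : ℂ)) n := by
  have hpi := Real.pi_pos
  have hsub1 : Set.uIcc (0:ℝ) π ⊆ Set.uIcc 0 (2*π) := by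
    rw [Set.uIcc_of_le hpi.le, Set.uIcc_of_le (by linarith)]
    exact Set.Icc_subset_Icc le_rfl (by linarith)
  have hG : ∀ r : ℝ → ℝ, Continuous r →
      IntegrableOn (fun θ => g θ * (r θ : ℂ)) (Set.Ioo 0 π) volume := by
    intro r hr
    have h1 : IntervalIntegrable (fun θ => g θ * ((r θ : ℝ) : ℂ)) volume 0 π :=
      (hint.mono_set hsub1).mul_continuousOn
        (Complex.continuous_ofReal.comp hr).continuousOn
    exact ((intervalIntegrable_iff_integrableOn_Ioo_of_le hpi.le).mp h1)
  have hentryP : ∀ j k : Fin n,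
      circleCoeff g ((j : ℤ) - (k : ℤ)) + circleCoeff g ((j : ℤ) + (k : ℤ) + 1)
        = (1/(π:ℂ)) * ∫ θ in Set.Ioo 0 π, g θ *
            (((Vq (j:ℕ)).eval (Real.cos θ) * (Vq (k:ℕ)).eval (Real.cos θ)
              * (2 * Real.cos (θ/2)^2) : ℝ) : ℂ) := by
    intro j k
    rw [circleCoeff_eq g hint heven hper, circleCoeff_eq g hint heven hper, ← mul_add]
    congr 1
    rw [← MeasureTheory.integral_add (hG _ (by fun_prop)) (hG _ (by fun_prop))]
    refine MeasureTheory.setIntegral_congr_fun measurableSet_Ioo (fun θ hθ => ?_)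
    have e1 := Vq_eval hθ (j:ℕ)
    have e2 := Vq_eval hθ (k:ℕ)
    have A : ((((j:ℤ) - (k:ℤ) : ℤ) : ℝ)*θ + (((j:ℤ) + (k:ℤ) + 1 : ℤ) : ℝ)*θ)/2
        = (2*(j:ℝ)+1)*θ/2 := by push_cast; ring
    have B : ((((j:ℤ) - (k:ℤ) : ℤ) : ℝ)*θ - (((j:ℤ) + (k:ℤ) + 1 : ℤ) : ℝ)*θ)/2
        = -((2*(k:ℝ)+1)*θ/2) := by push_cast; ring
    have hreal : Real.cos ((((j:ℤ) - (k:ℤ) : ℤ) : ℝ)*θ)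
          + Real.cos ((((j:ℤ) + (k:ℤ) + 1 : ℤ) : ℝ)*θ)
        = (Vq (j:ℕ)).eval (Real.cos θ) * (Vq (k:ℕ)).eval (Real.cos θ)
            * (2 * Real.cos (θ/2)^2) := by
      rw [Real.cos_add_cos, A, B, Real.cos_neg, ← e1, ← e2]
      push_cast
      ring
    rw [← mul_add, ← Complex.ofReal_add, hreal]
  have hentryM : ∀ j k : Fin n,
      circleCoeff g ((j : ℤ) - (k : ℤ)) - circleCoeff g ((j : ℤ) + (k : ℤ) + 1)
        = (1/(π:ℂ)) * ∫ θ in Set.Ioo 0 π, g θ *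
            (((Wq (j:ℕ)).eval (Real.cos θ) * (Wq (k:ℕ)).eval (Real.cos θ)
              * (2 * Real.sin (θ/2)^2) : ℝ) : ℂ) := by
    intro j k
    rw [circleCoeff_eq g hint heven hper, circleCoeff_eq g hint heven hper, ← mul_sub]
    congr 1
    rw [← MeasureTheory.integral_sub (hG _ (by fun_prop)) (hG _ (by fun_prop))]
    refine MeasureTheory.setIntegral_congr_fun measurableSet_Ioo (fun θ hθ => ?_)
    have e1 := Wq_eval hθ (j:ℕ)
    have e2 := Wq_eval hθ (k:ℕ)
    have A : ((((j:ℤ) - (k:ℤ) : ℤ) : ℝ)*θ + (((j:ℤ) + (k:ℤ) + 1 : ℤ) : ℝ)*θ)/2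
        = (2*(j:ℝ)+1)*θ/2 := by push_cast; ring
    have B : ((((j:ℤ) - (k:ℤ) : ℤ) : ℝ)*θ - (((j:ℤ) + (k:ℤ) + 1 : ℤ) : ℝ)*θ)/2
        = -((2*(k:ℝ)+1)*θ/2) := by push_cast; ring
    have hreal : Real.cos ((((j:ℤ) - (k:ℤ) : ℤ) : ℝ)*θ)
          - Real.cos ((((j:ℤ) + (k:ℤ) + 1 : ℤ) : ℝ)*θ)
        = (Wq (j:ℕ)).eval (Real.cos θ) * (Wq (k:ℕ)).eval (Real.cos θ)
            * (2 * Real.sin (θ/2)^2) := by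
      rw [Real.cos_sub_cos, A, B, Real.sin_neg, ← e1, ← e2]
      push_cast
      ring
    rw [← mul_sub, ← Complex.ofReal_sub, hreal]
  have hVvan : ∀ j a : ℕ, j < a → (Vq j).coeff a = 0 := fun j a h => Vq_coeff_eq_zero h
  have hWvan : ∀ j a : ℕ, j < a → (Wq j).coeff a = 0 := fun j a h => Wq_coeff_eq_zero h
  have hdetP : Matrix.det (Matrix.of fun j k : Fin n =>
        circleCoeff g ((j : ℤ) - (k : ℤ)) + circleCoeff g ((j : ℤ) + (k : ℤ) + 1))
      = (1/(π:ℂ))^n * ((2:ℂ)^(∑ i ∈ Finset.range n, i))^2 *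
        Matrix.det (Matrix.of fun a b : Fin n =>
          ∫ θ in Set.Ioo 0 π, g θ *
            (((Real.cos θ)^((a:ℕ)+(b:ℕ)) * (2 * Real.cos (θ/2)^2) : ℝ) : ℂ)) := by
    rw [show (Matrix.of fun j k : Fin n =>
        circleCoeff g ((j : ℤ) - (k : ℤ)) + circleCoeff g ((j : ℤ) + (k : ℤ) + 1))
      = Matrix.of (fun j k : Fin n => (1/(π:ℂ)) *
          ∫ θ in Set.Ioo 0 π, g θ *
            (((Vq (j:ℕ)).eval (Real.cos θ) * (Vq (k:ℕ)).eval (Real.cos θ)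
              * (2 * Real.cos (θ/2)^2) : ℝ) : ℂ)) from by ext j k; exact hentryP j k]
    exact det_factor n g hG Vq hVvan Vq_deg Vq_lead _ (by fun_prop)
  have hdetMm : Matrix.det (Matrix.of fun j k : Fin n =>
        circleCoeff g ((j : ℤ) - (k : ℤ)) - circleCoeff g ((j : ℤ) + (k : ℤ) + 1))
      = (1/(π:ℂ))^n * ((2:ℂ)^(∑ i ∈ Finset.range n, i))^2 *
        Matrix.det (Matrix.of fun a b : Fin n =>
          ∫ θ in Set.Ioo 0 π, g θ *
            (((Real.cos θ)^((a:ℕ)+(b:ℕ)) * (2 * Real.sin (θ/2)^2) : ℝ) : ℂ)) := by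
    rw [show (Matrix.of fun j k : Fin n =>
        circleCoeff g ((j : ℤ) - (k : ℤ)) - circleCoeff g ((j : ℤ) + (k : ℤ) + 1))
      = Matrix.of (fun j k : Fin n => (1/(π:ℂ)) *
          ∫ θ in Set.Ioo 0 π, g θ *
            (((Wq (j:ℕ)).eval (Real.cos θ) * (Wq (k:ℕ)).eval (Real.cos θ)
              * (2 * Real.sin (θ/2)^2) : ℝ) : ℂ)) from by ext j k; exact hentryM j k]
    exact det_factor n g hG Wq hWvan Wq_deg Wq_lead _ (by fun_prop)
  have hHP : hankelDet (fun x => g (Real.arccos x) * (Real.sqrt ((1 + x) / (1 - x)) : ℂ)) n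
      = Matrix.det (Matrix.of fun a b : Fin n =>
          ∫ θ in Set.Ioo 0 π, g θ *
            (((Real.cos θ)^((a:ℕ)+(b:ℕ)) * (2 * Real.cos (θ/2)^2) : ℝ) : ℂ)) := by
    unfold hankelDet
    congr 1
    ext a b
    simp only [Matrix.of_apply]
    rw [intervalIntegral.integral_of_le (by linarith : (-1:ℝ) ≤ 1),
      MeasureTheory.integral_Ioc_eq_integral_Ioo, subst_cos]
    refine MeasureTheory.setIntegral_congr_fun measurableSet_Ioo (fun θ hθ => ?_)
    rw [Real.arccos_cos hθ.1.le hθ.2.le]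
    have w := weightP hθ
    have wc : (Real.sin θ : ℂ) * ((Real.sqrt ((1 + Real.cos θ) / (1 - Real.cos θ)) : ℝ) : ℂ)
        = ((2 * Real.cos (θ/2)^2 : ℝ) : ℂ) := by
      rw [← Complex.ofReal_mul, w]
    rw [Complex.ofReal_mul, Complex.ofReal_pow]
    linear_combination ((Real.cos θ : ℂ)^((a:ℕ)+(b:ℕ)) * g θ) * wc
  have hHM : hankelDet (fun x => g (Real.arccos x) * (Real.sqrt ((1 - x) / (1 + x)) : ℂ)) n
      = Matrix.det (Matrix.of fun a b : Fin n =>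
          ∫ θ in Set.Ioo 0 π, g θ *
            (((Real.cos θ)^((a:ℕ)+(b:ℕ)) * (2 * Real.sin (θ/2)^2) : ℝ) : ℂ)) := by
    unfold hankelDet
    congr 1
    ext a b
    simp only [Matrix.of_apply]
    rw [intervalIntegral.integral_of_le (by linarith : (-1:ℝ) ≤ 1),
      MeasureTheory.integral_Ioc_eq_integral_Ioo, subst_cos]
    refine MeasureTheory.setIntegral_congr_fun measurableSet_Ioo (fun θ hθ => ?_)
    rw [Real.arccos_cos hθ.1.le hθ.2.le]
    have w := weightM hθ
    have wc : (Real.sin θ : ℂ) * ((Real.sqrt ((1 - Real.cos θ) / (1 + Real.cos θ)) : ℝ) : ℂ)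
        = ((2 * Real.sin (θ/2)^2 : ℝ) : ℂ) := by
      rw [← Complex.ofReal_mul, w]
    rw [Complex.ofReal_mul, Complex.ofReal_pow]
    linear_combination ((Real.cos θ : ℂ)^((a:ℕ)+(b:ℕ)) * g θ) * wc
  rw [hdetP, hdetMm, hHP, hHM]
  set S : ℕ := ∑ i ∈ Finset.range n, i with hS
  have h2S : S * 2 = n * (n-1) := Finset.sum_range_id_mul_two n
  have hzpow : (2:ℂ)^(2 * (n : ℤ)^2 - 2 * (n : ℤ)) = (2:ℂ)^(4*S) := by
    have hcast : ((4*S : ℕ) : ℤ) = 2*(n:ℤ)^2 - 2*(n:ℤ) := by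
      rw [show (4*S:ℕ) = 2*(n*(n-1)) from by omega]
      push_cast [Nat.cast_sub hn]
      ring
    rw [← hcast, zpow_natCast]
  rw [hzpow]
  have hpine : (π : ℂ) ≠ 0 := by
    simpa using Real.pi_ne_zero
  ring
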